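/- Let g : ℝⁿ → ℝ be a differentiable strongly convex function such that the sublevel set 𝒜 = {x ∈ ℝⁿ : g(x) ≤ 0} is compact and nonempty, and suppose there exists x₀ ∈ ℝⁿ with g(x₀) < 0 (Slater's condition). Then for every θ ∈ ℝⁿ with θ ≠ 0, the maximizer a*(θ) of the linear functional a ↦ ⟨θ, a⟩ over 𝒜 exists and is unique, satisfies g(a*(θ)) = 0, and there exists a scalar ω*(θ) > 0 such that ∇g(a*(θ)) = ω*(θ)·θ. -/

import Mathlib

set_option maxHeartbeats 1000000

open RealInnerProductSpace Topology

/-- For a differentiable strongly convex `g` whose zero-sublevel set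
`𝒜 = {x | g x ≤ 0}` is compact and nonempty and satisfies Slater's condition, and for every
`θ ≠ 0`, the maximizer of `a ↦ ⟪θ, a⟫` over `𝒜` exists, is unique, lies on the boundary
`{g = 0}`, and the gradient of `g` there is a positive multiple of `θ`. -/
theorem exists_unique_linear_maximizer_on_sublevel {n : ℕ}
    (g : EuclideanSpace ℝ (Fin n) → ℝ) (hg : Differentiable ℝ g)
    (κ : ℝ) (hκ : 0 < κ) (hsc : StrongConvexOn Set.univ κ g)
    (hcompact : IsCompact {x : EuclideanSpace ℝ (Fin n) | g x ≤ 0})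
    (hne : {x : EuclideanSpace ℝ (Fin n) | g x ≤ 0}.Nonempty)
    (x₀ : EuclideanSpace ℝ (Fin n)) (hx₀ : g x₀ < 0)
    (θ : EuclideanSpace ℝ (Fin n)) (hθ : θ ≠ 0) :
    ∃ a : EuclideanSpace ℝ (Fin n),
      (g a ≤ 0 ∧ ∀ b, g b ≤ 0 → ⟪θ, b⟫ ≤ ⟪θ, a⟫) ∧
      (∀ a', (g a' ≤ 0 ∧ ∀ b, g b ≤ 0 → ⟪θ, b⟫ ≤ ⟪θ, a'⟫) → a' = a) ∧
      g a = 0 ∧ ∃ ω : ℝ, 0 < ω ∧ gradient g a = ω • θ := by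
  classical
  have hθn : (0:ℝ) < ‖θ‖ := norm_pos_iff.mpr hθ
  -- existence of a maximizer
  have hcont : ContinuousOn (fun b : EuclideanSpace ℝ (Fin n) => ⟪θ, b⟫) {x | g x ≤ 0} :=
    (continuous_const.inner continuous_id).continuousOn
  obtain ⟨a, haA, hamax'⟩ := hcompact.exists_isMaxOn hne hcont
  have haA : g a ≤ 0 := haA
  have hamax : ∀ b, g b ≤ 0 → ⟪θ, b⟫ ≤ ⟪θ, a⟫ := fun b hb => hamax' hb
  -- any maximizer lies on the boundary
  have hbd : ∀ c, g c ≤ 0 → (∀ b, g b ≤ 0 → ⟪θ, b⟫ ≤ ⟪θ, c⟫) → g c = 0 := by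
    intro c hc hcmax
    by_contra hne0
    have hclt : g c < 0 := lt_of_le_of_ne hc hne0
    have hopen : IsOpen {x : EuclideanSpace ℝ (Fin n) | g x < 0} :=
      isOpen_lt hg.continuous continuous_const
    obtain ⟨ε, hε, hball⟩ := Metric.isOpen_iff.mp hopen c hclt
    set t : ℝ := ε / (2 * ‖θ‖) with ht
    have ht0 : 0 < t := by positivity
    have hmem : c + t • θ ∈ Metric.ball c ε := by
      rw [Metric.mem_ball, dist_eq_norm]
      have h1 : c + t • θ - c = t • θ := by abel
      rw [h1, norm_smul, Real.norm_eq_abs, abs_of_pos ht0, ht, div_mul_eq_mul_div,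
        div_lt_iff₀ (by positivity)]
      nlinarith
    have hle : g (c + t • θ) < 0 := hball hmem
    have h3 := hcmax (c + t • θ) hle.le
    rw [inner_add_right, real_inner_smul_right, real_inner_self_eq_norm_sq] at h3
    nlinarith [mul_pos ht0 (pow_pos hθn 2)]
  have hga : g a = 0 := hbd a haA hamax
  -- derivative along lines
  have hderiv : ∀ (c v : EuclideanSpace ℝ (Fin n)),
      HasDerivAt (fun t : ℝ => g (c + t • v)) ⟪gradient g c, v⟫ 0 := by
    intro c v
    have hfd : HasFDerivAt g ((InnerProductSpace.toDual ℝ _) (gradient g c)) c :=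
      (hg c).hasGradientAt.hasFDerivAt
    have hline : HasDerivAt (fun t : ℝ => c + t • v) v 0 := by
      simpa using ((hasDerivAt_id (0:ℝ)).smul_const v).const_add c
    have h0 : c + (0:ℝ) • v = c := by simp
    rw [← h0] at hfd
    have hcomp := hfd.comp_hasDerivAt 0 hline
    simp only [zero_smul, add_zero, InnerProductSpace.toDual_apply_apply] at hcomp
    exact hcomp
  set G := gradient g a with hGdef
  -- key variational inequality at the maximizer
  have key : ∀ v, ⟪G, v⟫ < 0 → ⟪θ, v⟫ ≤ 0 := by
    intro v hv
    have hslope := hasDerivAt_iff_tendsto_slope.mp (hderiv a v)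
    have hev : ∀ᶠ t in 𝓝[≠] (0:ℝ), slope (fun t => g (a + t • v)) 0 t < 0 :=
      hslope.eventually_lt_const hv
    have hsub : 𝓝[>] (0:ℝ) ≤ 𝓝[≠] (0:ℝ) :=
      nhdsWithin_mono 0 (fun x hx => ne_of_gt hx)
    obtain ⟨t, hts, ht0⟩ :=
      ((hev.filter_mono hsub).and (eventually_mem_nhdsWithin (s := Set.Ioi (0:ℝ)))).exists
    have ht0 : (0:ℝ) < t := ht0
    rw [slope_def_field] at hts
    simp only [zero_smul, add_zero, sub_zero] at hts
    have hgt : g (a + t • v) < g a := by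
      have h3 := (div_lt_iff₀ ht0).mp hts
      linarith
    have := hamax (a + t • v) (by linarith [hga])
    rw [inner_add_right, real_inner_smul_right] at this
    nlinarith
  -- extend to ≤ 0
  -- first, G ≠ 0, via convexity slope towards x₀
  have hconv : ConvexOn ℝ Set.univ g := (hsc.strictConvexOn hκ).convexOn
  have hGx₀ : ⟪G, x₀ - a⟫ ≤ g x₀ - g a := by
    have hslope := hasDerivAt_iff_tendsto_slope.mp (hderiv a (x₀ - a))
    have hsub : 𝓝[>] (0:ℝ) ≤ 𝓝[≠] (0:ℝ) :=
      nhdsWithin_mono 0 (fun x hx => ne_of_gt hx)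
    refine le_of_tendsto (hslope.mono_left hsub) ?_
    filter_upwards [Ioc_mem_nhdsGT (zero_lt_one)] with t ht
    obtain ⟨ht0, ht1⟩ := ht
    rw [slope_def_field]
    simp only [zero_smul, add_zero, sub_zero]
    rw [div_le_iff₀ ht0]
    have hpt : a + t • (x₀ - a) = (1 - t) • a + t • x₀ := by
      rw [smul_sub, sub_smul, one_smul]; abel
    have hcv : g ((1 - t) • a + t • x₀) ≤ (1 - t) * g a + t * g x₀ := by
      simpa using hconv.2 (Set.mem_univ a) (Set.mem_univ x₀)
        (show (0:ℝ) ≤ 1 - t by linarith) ht0.le (by ring)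
    rw [← hpt] at hcv
    nlinarith
  have hGx₀' : ⟪G, x₀ - a⟫ < 0 := by rw [hga] at hGx₀; linarith
  have hG : G ≠ 0 := by
    intro h
    rw [h, inner_zero_left] at hGx₀'
    exact lt_irrefl _ hGx₀'
  have hGn : (0:ℝ) < ‖G‖ := norm_pos_iff.mpr hG
  have key2 : ∀ v, ⟪G, v⟫ ≤ 0 → ⟪θ, v⟫ ≤ 0 := by
    intro v hv
    rcases lt_or_eq_of_le hv with h | h
    · exact key v h
    · have hε : ∀ ε : ℝ, 0 < ε → ⟪θ, v⟫ ≤ ε * ⟪θ, G⟫ := by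
        intro ε hε
        have h1 : ⟪G, v - ε • G⟫ < 0 := by
          rw [inner_sub_right, real_inner_smul_right, real_inner_self_eq_norm_sq, h]
          nlinarith [mul_pos hε (pow_pos hGn 2)]
        have h2 := key (v - ε • G) h1
        rw [inner_sub_right, real_inner_smul_right] at h2
        linarith
      rcases le_or_gt ⟪θ, G⟫ 0 with hK | hK
      · have := hε 1 one_pos; nlinarith
      · by_contra hpos
        push_neg at hpos
        have h4 := hε (⟪θ, v⟫ / (2 * ⟪θ, G⟫)) (div_pos hpos (by linarith))
        have haux : ∀ X K : ℝ, K ≠ 0 → X / (2 * K) * K = X / 2 := by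
          intro X K hKne; field_simp
        have h5 : (⟪θ, v⟫ / (2 * ⟪θ, G⟫)) * ⟪θ, G⟫ = ⟪θ, v⟫ / 2 :=
          haux _ _ (ne_of_gt hK)
        rw [h5] at h4
        linarith
  -- Farkas: θ is a nonnegative multiple of G
  have hθG : (0:ℝ) ≤ ⟪θ, G⟫ := by
    have h1 : ⟪G, -G⟫ ≤ 0 := by
      rw [inner_neg_right, real_inner_self_eq_norm_sq]
      nlinarith [pow_pos hGn 2]
    have := key2 (-G) h1
    rw [inner_neg_right] at this
    linarith
  set c : ℝ := ⟪G, θ⟫ / ‖G‖ ^ 2 with hc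
  have hcθ : ⟪G, θ⟫ = ⟪θ, G⟫ := real_inner_comm θ G
  have hc0 : 0 ≤ c := by rw [hc, hcθ]; positivity
  have horth : ⟪G, θ - c • G⟫ = 0 := by
    rw [inner_sub_right, real_inner_smul_right, real_inner_self_eq_norm_sq, hc]
    field_simp
    ring
  have hvle := key2 (θ - c • G) (le_of_eq horth)
  have hexp : ⟪θ, θ - c • G⟫ = ‖θ - c • G‖ ^ 2 := by
    have h1 : θ = (θ - c • G) + c • G := by abel
    calc ⟪θ, θ - c • G⟫ = ⟪(θ - c • G) + c • G, θ - c • G⟫ := by rw [← h1]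
      _ = ⟪θ - c • G, θ - c • G⟫ + c * ⟪G, θ - c • G⟫ := by
          rw [inner_add_left, real_inner_smul_left]
      _ = ‖θ - c • G‖ ^ 2 := by rw [horth, real_inner_self_eq_norm_sq]; ring
  have hv0 : θ - c • G = 0 := by
    have : ‖θ - c • G‖ ^ 2 ≤ 0 := by rw [← hexp]; exact hvle
    have h2 : ‖θ - c • G‖ = 0 := by nlinarith [norm_nonneg (θ - c • G)]
    exact norm_eq_zero.mp h2
  have hθeq : θ = c • G := by
    have := sub_eq_zero.mp hv0; exact this
  have hcne : c ≠ 0 := by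
    intro h
    rw [h, zero_smul] at hθeq
    exact hθ hθeq
  have hcpos : 0 < c := lt_of_le_of_ne hc0 (Ne.symm hcne)
  refine ⟨a, ⟨haA, hamax⟩, ?_, hga, c⁻¹, by positivity, ?_⟩
  · -- uniqueness
    intro a' ⟨ha', hmax'⟩
    by_contra hne'
    have heq : ⟪θ, a'⟫ = ⟪θ, a⟫ := le_antisymm (hamax a' ha') (hmax' a haA)
    have hstrict := (hsc.strictConvexOn hκ).2 (Set.mem_univ a') (Set.mem_univ a) hne'
      (by norm_num : (0:ℝ) < 1/2) (by norm_num : (0:ℝ) < 1/2) (by norm_num)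
    set m := (1/2 : ℝ) • a' + (1/2 : ℝ) • a with hm
    have hmlt : g m < 0 := by
      simp only [smul_eq_mul] at hstrict
      nlinarith
    have hmmax : ∀ b, g b ≤ 0 → ⟪θ, b⟫ ≤ ⟪θ, m⟫ := by
      intro b hb
      rw [hm, inner_add_right, real_inner_smul_right, real_inner_smul_right, heq]
      have := hamax b hb
      linarith
    have := hbd m hmlt.le hmmax
    linarith
  · -- gradient formula
    rw [← hGdef, hθeq, smul_smul, inv_mul_cancel₀ hcne, one_smul]
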